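/- arXiv:2512.21128 — 2 statements merged into one kernel-verified Lean document; each statement's English description precedes it below -/
import Mathlib

section
/- Let k ≥ 1, let G be a k-edge-connected finite simple graph on V with |V| ≥ 2, fix a root r ∈ V, and let 𝓛 be a maximal edge-covering laminar family of k-cuts avoiding r. Then: (i) every inclusion-minimal member of 𝓛 is a singleton; and (ii) if S ∈ 𝓛 has exactly one child, i.e., there is a unique inclusion-maximal member S′ of {T ∈ 𝓛 : T ⊊ S}, then S∖S′ consists of a single vertex v, this vertex has degree at least k+1 in G, and (S′, S) are snug shores for the snug vertex v. -/
open Finset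

variable {V : Type*} [Fintype V] [DecidableEq V]

/-- `Crosses S e`: exactly one endpoint of the edge/link `e` lies in `S`. -/
def Crosses (S : Finset V) (e : Sym2 V) : Prop :=
  ∃ x y : V, e = s(x, y) ∧ x ∈ S ∧ y ∉ S

instance (S : Finset V) : DecidablePred (Crosses S) := fun e =>
  decidable_of_iff (∃ x y : V, e = s(x, y) ∧ x ∈ S ∧ y ∉ S) Iff.rfl

/-- The cut `δ(S)`: edges of `G` with exactly one endpoint in `S`. -/
def cutEdges (G : SimpleGraph V) [DecidableRel G.Adj] (S : Finset V) :
    Finset (Sym2 V) :=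
  G.edgeFinset.filter fun e => Crosses S e

/-- `G` is `k`-edge-connected: every nonempty proper cut has at least `k` crossing edges. -/
def EdgeConnected (G : SimpleGraph V) [DecidableRel G.Adj] (k : ℕ) : Prop :=
  ∀ S : Finset V, S.Nonempty → S ≠ Finset.univ → k ≤ (cutEdges G S).card

/-- `S` is a `k`-cut: a nonempty proper vertex set with exactly `k` crossing edges. -/
def IsCut (G : SimpleGraph V) [DecidableRel G.Adj] (k : ℕ) (S : Finset V) : Prop :=
  S.Nonempty ∧ S ≠ Finset.univ ∧ (cutEdges G S).card = k

/-- `(S₁, S₂)` are snug shores for `v` (with respect to the root `r`):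
two `k`-cuts avoiding `r` with `v ∉ S₁` and `S₂ = S₁ ∪ {v}`. -/
def SnugShores (G : SimpleGraph V) [DecidableRel G.Adj] (k : ℕ) (r v : V)
    (S₁ S₂ : Finset V) : Prop :=
  IsCut G k S₁ ∧ IsCut G k S₂ ∧ r ∉ S₁ ∧ r ∉ S₂ ∧ v ∉ S₁ ∧ S₂ = insert v S₁

/-- `v` is a snug vertex (with respect to the root `r`). -/
def Snug (G : SimpleGraph V) [DecidableRel G.Adj] (k : ℕ) (r v : V) : Prop :=
  v ≠ r ∧ k + 1 ≤ G.degree v ∧ ∃ S₁ S₂ : Finset V, SnugShores G k r v S₁ S₂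

/-- A snug chain: snug vertices `u 0, …, u t` together with `k`-cuts
`S 0, …, S (t+1)` such that `(S i, S (i+1))` are snug shores for `u i`. -/
def IsSnugChain (G : SimpleGraph V) [DecidableRel G.Adj] (k : ℕ) (r : V)
    (t : ℕ) (u : ℕ → V) (S : ℕ → Finset V) : Prop :=
  ∀ i ≤ t, Snug G k r (u i) ∧ SnugShores G k r (u i) (S i) (S (i + 1))

/-- `L` is a maximal edge-covering laminar family of `k`-cuts avoiding `r`. -/
def MaxLaminarFamily (G : SimpleGraph V) [DecidableRel G.Adj] (k : ℕ) (r : V)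
    (L : Finset (Finset V)) : Prop :=
  (∀ A ∈ L, IsCut G k A ∧ r ∉ A) ∧
  (∀ A ∈ L, ∀ B ∈ L, A ⊆ B ∨ B ⊆ A ∨ A ∩ B = ∅) ∧
  (∀ e ∈ G.edgeSet, ∃ A ∈ L, Crosses A e) ∧
  (∀ T : Finset V, IsCut G k T → r ∉ T →
    (∀ A ∈ L, T ⊆ A ∨ A ⊆ T ∨ T ∩ A = ∅) → T ∈ L)

set_option linter.unusedSectionVars false

def pE (G : SimpleGraph V) [DecidableRel G.Adj] (A B : Finset V) : ℕ :=
  ∑ x ∈ A, ∑ y ∈ B, if G.Adj x y then 1 else 0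

lemma pE_union_right (G : SimpleGraph V) [DecidableRel G.Adj] (A : Finset V)
    {B C : Finset V} (h : Disjoint B C) :
    pE G A (B ∪ C) = pE G A B + pE G A C := by
  unfold pE
  rw [← Finset.sum_add_distrib]
  exact Finset.sum_congr rfl fun x _ => Finset.sum_union h

lemma pE_union_left (G : SimpleGraph V) [DecidableRel G.Adj]
    {A B : Finset V} (h : Disjoint A B) (C : Finset V) :
    pE G (A ∪ B) C = pE G A C + pE G B C := Finset.sum_union h

lemma pE_symm (G : SimpleGraph V) [DecidableRel G.Adj] (A B : Finset V) :
    pE G A B = pE G B A := by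
  unfold pE
  rw [Finset.sum_comm]
  exact Finset.sum_congr rfl fun y _ => Finset.sum_congr rfl fun x _ => by
    simp [G.adj_comm]

lemma pE_eq_zero (G : SimpleGraph V) [DecidableRel G.Adj] {A B : Finset V}
    (h : ∀ x ∈ A, ∀ y ∈ B, ¬ G.Adj x y) : pE G A B = 0 := by
  unfold pE
  refine Finset.sum_eq_zero fun x hx => Finset.sum_eq_zero fun y hy => ?_
  simp [h x hx y hy]

lemma pE_singleton (G : SimpleGraph V) [DecidableRel G.Adj] (v : V) (B : Finset V) :
    pE G {v} B = (B.filter (G.Adj v)).card := by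
  unfold pE
  rw [Finset.sum_singleton, Finset.card_filter]

lemma card_cutEdges (G : SimpleGraph V) [DecidableRel G.Adj] (S : Finset V) :
    (cutEdges G S).card = pE G S Sᶜ := by
  have : pE G S Sᶜ = ((S ×ˢ Sᶜ).filter fun p => G.Adj p.1 p.2).card := by
    rw [Finset.card_filter, Finset.sum_product]
    rfl
  rw [this]
  symm
  apply Finset.card_bij (fun p _ => s(p.1, p.2))
  · rintro ⟨x, y⟩ hp
    simp only [Finset.mem_filter, Finset.mem_product, Finset.mem_compl] at hp
    obtain ⟨⟨hx, hy⟩, hadj⟩ := hp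
    refine Finset.mem_filter.mpr ⟨?_, x, y, rfl, hx, hy⟩
    exact SimpleGraph.mem_edgeFinset.mpr hadj
  · rintro ⟨x, y⟩ hp ⟨x', y'⟩ hp' heq
    simp only [Finset.mem_filter, Finset.mem_product, Finset.mem_compl] at hp hp'
    rcases Sym2.eq_iff.mp heq with ⟨rfl, rfl⟩ | ⟨rfl, rfl⟩
    · rfl
    · exact absurd hp'.1.1 hp.1.2
  · intro e he
    obtain ⟨hE, x, y, rfl, hx, hy⟩ := Finset.mem_filter.mp he
    refine ⟨(x, y), ?_, rfl⟩
    simp only [Finset.mem_filter, Finset.mem_product, Finset.mem_compl]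
    exact ⟨⟨hx, hy⟩, SimpleGraph.mem_edgeFinset.mp hE⟩

lemma cut_singleton (G : SimpleGraph V) [DecidableRel G.Adj] (v : V) :
    (cutEdges G {v}).card = G.degree v := by
  rw [card_cutEdges, pE_singleton]
  rw [← SimpleGraph.card_neighborFinset_eq_degree]
  congr 1
  ext w
  simp only [Finset.mem_filter, Finset.mem_compl, Finset.mem_singleton,
    SimpleGraph.mem_neighborFinset]
  exact ⟨fun h => h.2, fun h => ⟨fun hw => by subst hw; exact G.irrefl h, h⟩⟩

/-- Properties of a maximal edge-covering laminar family `L` of `k`-cuts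
avoiding `r`: (i) every inclusion-minimal member of `L` is a singleton;
(ii) if `S ∈ L` has a unique inclusion-maximal proper subset `S' ∈ L`,
then `S ∖ S' = {v}` for a vertex `v` of degree at least `k+1`, which is snug
with snug shores `(S', S)`. -/
theorem maxLaminar_properties
    (k : ℕ) (hk : 1 ≤ k) (hV : 2 ≤ Fintype.card V)
    (G : SimpleGraph V) [DecidableRel G.Adj] (hG : EdgeConnected G k)
    (r : V) (L : Finset (Finset V)) (hL : MaxLaminarFamily G k r L) :
    (∀ A ∈ L, (¬ ∃ B ∈ L, B ⊂ A) → A.card = 1) ∧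
    (∀ S ∈ L, ∀ S' ∈ L, S' ⊂ S →
      (∀ T ∈ L, T ⊂ S → ¬ S' ⊂ T) →
      (∀ T ∈ L, T ⊂ S → (∀ T' ∈ L, T' ⊂ S → ¬ T ⊂ T') → T = S') →
      ∃ v : V, S \ S' = {v} ∧ k + 1 ≤ G.degree v ∧
        Snug G k r v ∧ SnugShores G k r v S' S) := by
  obtain ⟨hmem, hlam, hcov, hmax⟩ := hL
  have hdeg : ∀ v : V, k ≤ G.degree v := by
    intro v
    rw [← cut_singleton G v]
    apply hG _ (Finset.singleton_nonempty v)
    intro h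
    have h1 : Fintype.card V = 1 := by
      rw [← Finset.card_univ, ← h, Finset.card_singleton]
    omega
  have hneu : ∀ v : V, ({v} : Finset V) ≠ Finset.univ := by
    intro v h
    have h1 : Fintype.card V = 1 := by
      rw [← Finset.card_univ, ← h, Finset.card_singleton]
    omega
  have hcross : ∀ S ∈ L, ∀ x ∈ S, ∀ y ∈ S, G.Adj x y →
      ∃ B ∈ L, B ⊂ S ∧ ((x ∈ B ∧ y ∉ B) ∨ (y ∈ B ∧ x ∉ B)) := by
    intro S hS x hx y hy hadj
    obtain ⟨A, hA, x', y', heq, hx', hy'⟩ := hcov s(x, y) (G.mem_edgeSet.mpr hadj)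
    have hcase : (x ∈ A ∧ y ∉ A) ∨ (y ∈ A ∧ x ∉ A) := by
      rcases Sym2.eq_iff.mp heq with ⟨rfl, rfl⟩ | ⟨rfl, rfl⟩
      · exact Or.inl ⟨hx', hy'⟩
      · exact Or.inr ⟨hx', hy'⟩
    refine ⟨A, hA, ?_, hcase⟩
    rcases hlam A hA S hS with h1 | h1 | h1
    · refine Finset.ssubset_iff_subset_ne.mpr ⟨h1, ?_⟩
      rintro rfl
      rcases hcase with ⟨_, h⟩ | ⟨_, h⟩
      · exact h hy
      · exact h hx
    · exfalso
      rcases hcase with ⟨_, h⟩ | ⟨_, h⟩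
      · exact h (h1 hy)
      · exact h (h1 hx)
    · exfalso
      rcases hcase with ⟨h, _⟩ | ⟨h, _⟩
      · exact Finset.notMem_empty x (h1 ▸ Finset.mem_inter.mpr ⟨h, hx⟩)
      · exact Finset.notMem_empty y (h1 ▸ Finset.mem_inter.mpr ⟨h, hy⟩)
  constructor
  · -- part (i)
    intro A hA hmin
    obtain ⟨hcutA, hrA⟩ := hmem A hA
    have hindep : ∀ x ∈ A, ∀ y ∈ A, ¬ G.Adj x y := by
      intro x hx y hy hadj
      obtain ⟨B, hB, hBA, _⟩ := hcross A hA x hx y hy hadj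
      exact hmin ⟨B, hB, hBA⟩
    have key : pE G A Aᶜ = ∑ x ∈ A, G.degree x := by
      unfold pE
      refine Finset.sum_congr rfl fun x hx => ?_
      have h1 : ({x} : Finset V)ᶜ = (A \ {x}) ∪ Aᶜ := by
        ext y
        simp only [Finset.mem_compl, Finset.mem_union, Finset.mem_sdiff, Finset.mem_singleton]
        constructor
        · intro h
          by_cases hy : y ∈ A
          · exact Or.inl ⟨hy, h⟩
          · exact Or.inr hy
        · rintro (⟨_, h⟩ | h)
          · exact h
          · rintro rfl; exact h hx
      have h3 : pE G {x} (A \ {x}) = 0 := by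
        apply pE_eq_zero
        intro a ha b hb
        rw [Finset.mem_singleton] at ha; subst ha
        exact hindep a hx b (Finset.mem_sdiff.mp hb).1
      have hdj : Disjoint (A \ {x}) Aᶜ :=
        disjoint_compl_right.mono_left Finset.sdiff_subset
      have h2 : G.degree x = pE G {x} ({x} : Finset V)ᶜ := by
        rw [← cut_singleton G x, card_cutEdges]
      have h4 : G.degree x = pE G {x} Aᶜ := by
        rw [h2, h1, pE_union_right G _ hdj, h3, zero_add]
      rw [h4]
      unfold pE
      rw [Finset.sum_singleton]
    have hAk : A.card * k ≤ k := by
      have h0 := hcutA.2.2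
      rw [card_cutEdges] at h0
      calc A.card * k = ∑ _x ∈ A, k := by rw [Finset.sum_const, smul_eq_mul, mul_comm]
        _ ≤ ∑ x ∈ A, G.degree x := Finset.sum_le_sum fun x _ => hdeg x
        _ = k := by rw [← key, h0]
    have h1 : 1 ≤ A.card := Finset.card_pos.mpr hcutA.1
    by_contra hne
    have h2 : 2 ≤ A.card := by omega
    have h3 : 2 * k ≤ A.card * k := Nat.mul_le_mul_right k h2
    omega
  · -- part (ii)
    intro S hS S' hS' hss hno hmaxchild
    obtain ⟨hcutS, hrS⟩ := hmem S hS
    obtain ⟨hcutS', hrS'⟩ := hmem S' hS'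
    have hsub : S' ⊆ S := hss.subset
    have childSub : ∀ B ∈ L, B ⊂ S → B ⊆ S' := by
      intro B hB hBS
      obtain ⟨T, hTM, hTmax⟩ := Finset.exists_max_image (L.filter fun T => B ⊆ T ∧ T ⊂ S)
        Finset.card ⟨B, Finset.mem_filter.mpr ⟨hB, Finset.Subset.refl B, hBS⟩⟩
      obtain ⟨hTL, hBT, hTS⟩ := Finset.mem_filter.mp hTM
      have hTeq : T = S' := by
        apply hmaxchild T hTL hTS
        intro T' hT' hT'S hTT'
        have hmem' : T' ∈ L.filter fun T => B ⊆ T ∧ T ⊂ S :=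
          Finset.mem_filter.mpr ⟨hT', hBT.trans hTT'.subset, hT'S⟩
        exact absurd (hTmax T' hmem') (not_le.mpr (Finset.card_lt_card hTT'))
      exact hTeq ▸ hBT
    have hDsub : S \ S' ⊆ S := Finset.sdiff_subset
    have hDne : (S \ S').Nonempty := by
      obtain ⟨x, hxS, hxS'⟩ := Finset.exists_of_ssubset hss
      exact ⟨x, Finset.mem_sdiff.mpr ⟨hxS, hxS'⟩⟩
    have hindep : ∀ x ∈ S \ S', ∀ y ∈ S \ S', ¬ G.Adj x y := by
      intro x hx y hy hadj
      obtain ⟨B, hB, hBS, hc⟩ := hcross S hS x (hDsub hx) y (hDsub hy) hadj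
      have hBsub := childSub B hB hBS
      rcases hc with ⟨h, _⟩ | ⟨h, _⟩
      · exact (Finset.mem_sdiff.mp hx).2 (hBsub h)
      · exact (Finset.mem_sdiff.mp hy).2 (hBsub h)
    have hkS : pE G S Sᶜ = k := by rw [← card_cutEdges]; exact hcutS.2.2
    have hkS' : pE G S' S'ᶜ = k := by rw [← card_cutEdges]; exact hcutS'.2.2
    have hS'c : S'ᶜ = (S \ S') ∪ Sᶜ := by
      ext x
      simp only [Finset.mem_compl, Finset.mem_union, Finset.mem_sdiff]
      constructor
      · intro h
        by_cases hx : x ∈ S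
        · exact Or.inl ⟨hx, h⟩
        · exact Or.inr hx
      · rintro (⟨_, h⟩ | h)
        · exact h
        · exact fun hx => h (hsub hx)
    have hSsplit : S' ∪ (S \ S') = S := Finset.union_sdiff_of_subset hsub
    have hdS'D : Disjoint S' (S \ S') := Finset.disjoint_sdiff
    have hdDSc : Disjoint (S \ S') Sᶜ :=
      disjoint_compl_right.mono_left hDsub
    have hdS'Sc : Disjoint S' Sᶜ := disjoint_compl_right.mono_left hsub
    -- split equations
    have eqS' : pE G S' (S \ S') + pE G S' Sᶜ = k := by
      rw [← hkS', hS'c, pE_union_right G S' hdDSc]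
    have eqS : pE G S' Sᶜ + pE G (S \ S') Sᶜ = k := by
      rw [← pE_union_left G hdS'D, hSsplit, hkS]
    have hcard1 : (S \ S').card = 1 := by
      by_contra hnc
      have h2 : 2 ≤ (S \ S').card := by
        have := Finset.card_pos.mpr hDne; omega
      obtain ⟨v, hv⟩ := hDne
      have hvS : v ∈ S := hDsub hv
      have hvS' : v ∉ S' := (Finset.mem_sdiff.mp hv).2
      have hsplitD : {v} ∪ ((S \ S') \ {v}) = S \ S' :=
        Finset.union_sdiff_of_subset (Finset.singleton_subset_iff.mpr hv)
      have hdvD : Disjoint ({v} : Finset V) ((S \ S') \ {v}) := by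
        simp [Finset.disjoint_left]
      have hdvS' : Disjoint ({v} : Finset V) S' :=
        Finset.disjoint_singleton_left.mpr hvS'
      have hdD'Sc : Disjoint ((S \ S') \ {v}) Sᶜ :=
        hdDSc.mono_left Finset.sdiff_subset
      have hdvSc : Disjoint ({v} : Finset V) Sᶜ :=
        disjoint_compl_right.mono_left (Finset.singleton_subset_iff.mpr hvS)
      have hz1 : pE G {v} ((S \ S') \ {v}) = 0 := by
        apply pE_eq_zero
        intro a ha b hb
        rw [Finset.mem_singleton] at ha; subst ha
        exact hindep a hv b (Finset.mem_sdiff.mp hb).1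
      have hz2 : pE G ((S \ S') \ {v}) {v} = 0 := by
        rw [pE_symm]; exact hz1
      -- split pE S' (S\S') and pE (S\S') Sᶜ
      have es1 : pE G S' (S \ S') = pE G S' {v} + pE G S' ((S \ S') \ {v}) := by
        conv_lhs => rw [← hsplitD]
        exact pE_union_right G S' hdvD
      have es2 : pE G (S \ S') Sᶜ = pE G {v} Sᶜ + pE G ((S \ S') \ {v}) Sᶜ := by
        conv_lhs => rw [← hsplitD]
        exact pE_union_left G hdvD Sᶜ
      -- cut T = insert v S'
      have hTsub : insert v S' ⊆ S := Finset.insert_subset hvS hsub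
      have hTne : (insert v S').Nonempty := ⟨v, Finset.mem_insert_self v S'⟩
      have hTnu : insert v S' ≠ Finset.univ := fun h => hrS (hTsub (h ▸ Finset.mem_univ r))
      have hgT := hG (insert v S') hTne hTnu
      rw [card_cutEdges] at hgT
      have hTc : (insert v S')ᶜ = ((S \ S') \ {v}) ∪ Sᶜ := by
        ext x
        simp only [Finset.mem_compl, Finset.mem_insert, Finset.mem_union, Finset.mem_sdiff,
          Finset.mem_singleton, not_or]
        constructor
        · rintro ⟨hxv, hxS'⟩
          by_cases hx : x ∈ S
          · exact Or.inl ⟨⟨hx, hxS'⟩, hxv⟩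
          · exact Or.inr hx
        · rintro (⟨⟨_, h2'⟩, h3⟩ | h)
          · exact ⟨h3, h2'⟩
          · exact ⟨fun hxv => h (hxv ▸ hvS), fun hx => h (hsub hx)⟩
      have ecT : pE G (insert v S') (insert v S')ᶜ
          = (pE G {v} ((S \ S') \ {v}) + pE G {v} Sᶜ)
            + (pE G S' ((S \ S') \ {v}) + pE G S' Sᶜ) := by
        rw [hTc, Finset.insert_eq, pE_union_left G hdvS',
          pE_union_right G {v} hdD'Sc, pE_union_right G S' hdD'Sc]
      -- cut T2 = S \ {v}
      have hT2eq : S \ {v} = S' ∪ ((S \ S') \ {v}) := by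
        ext x
        simp only [Finset.mem_sdiff, Finset.mem_union, Finset.mem_singleton]
        constructor
        · rintro ⟨hxS, hxv⟩
          by_cases hx : x ∈ S'
          · exact Or.inl hx
          · exact Or.inr ⟨⟨hxS, hx⟩, hxv⟩
        · rintro (h | ⟨⟨h1', h2'⟩, h3⟩)
          · exact ⟨hsub h, fun hxv => hvS' (hxv ▸ h)⟩
          · exact ⟨h1', h3⟩
      have hT2ne : (S \ {v}).Nonempty := by
        obtain ⟨u, hu⟩ := hcutS'.1
        exact ⟨u, by rw [hT2eq]; exact Finset.mem_union_left _ hu⟩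
      have hT2nu : S \ {v} ≠ Finset.univ :=
        fun h => hrS (Finset.sdiff_subset (h ▸ Finset.mem_univ r))
      have hgT2 := hG (S \ {v}) hT2ne hT2nu
      rw [card_cutEdges] at hgT2
      have hT2c : (S \ {v})ᶜ = {v} ∪ Sᶜ := by
        ext x
        simp only [Finset.mem_compl, Finset.mem_sdiff, Finset.mem_union, Finset.mem_singleton,
          not_and, not_not]
        constructor
        · intro h
          by_cases hx : x ∈ S
          · exact Or.inl (h hx)
          · exact Or.inr hx
        · rintro (rfl | h)
          · exact fun _ => rfl
          · exact fun hx => absurd hx h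
      have ecT2 : pE G (S \ {v}) (S \ {v})ᶜ
          = (pE G S' {v} + pE G S' Sᶜ)
            + (pE G ((S \ S') \ {v}) {v} + pE G ((S \ S') \ {v}) Sᶜ) := by
        rw [hT2c, hT2eq, pE_union_left G (hdS'D.mono_right Finset.sdiff_subset),
          pE_union_right G S' hdvSc, pE_union_right G _ hdvSc]
      have hcutTk : pE G (insert v S') (insert v S')ᶜ = k := by omega
      have hTcut : IsCut G k (insert v S') :=
        ⟨hTne, hTnu, by rw [card_cutEdges]; exact hcutTk⟩
      have hrT : r ∉ insert v S' := fun h => hrS (hTsub h)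
      have hTlam : ∀ A ∈ L, insert v S' ⊆ A ∨ A ⊆ insert v S' ∨ insert v S' ∩ A = ∅ := by
        intro A hA
        rcases hlam A hA S hS with h1 | h1 | h1
        · by_cases hAS : A = S
          · subst hAS; exact Or.inl hTsub
          · exact Or.inr (Or.inl ((childSub A hA
              (Finset.ssubset_iff_subset_ne.mpr ⟨h1, hAS⟩)).trans (Finset.subset_insert v S')))
        · exact Or.inl (hTsub.trans h1)
        · refine Or.inr (Or.inr ?_)
          rw [← Finset.subset_empty, ← h1]
          intro x hx
          obtain ⟨hx1, hx2⟩ := Finset.mem_inter.mp hx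
          exact Finset.mem_inter.mpr ⟨hx2, hTsub hx1⟩
      have hTL : insert v S' ∈ L := hmax _ hTcut hrT hTlam
      obtain ⟨w, hw, hwv⟩ := Finset.exists_mem_ne (show 1 < (S \ S').card by omega) v
      have hwS' : w ∉ S' := (Finset.mem_sdiff.mp hw).2
      have hTss : insert v S' ⊂ S := by
        refine Finset.ssubset_iff_subset_ne.mpr ⟨hTsub, fun h => ?_⟩
        have : w ∈ insert v S' := h ▸ hDsub hw
        rcases Finset.mem_insert.mp this with h' | h'
        · exact hwv h'
        · exact hwS' h'
      exact hvS' (childSub _ hTL hTss (Finset.mem_insert_self v S'))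
    obtain ⟨v, hDv⟩ := Finset.card_eq_one.mp hcard1
    have hvD : v ∈ S \ S' := hDv ▸ Finset.mem_singleton_self v
    have hvS : v ∈ S := hDsub hvD
    have hvS' : v ∉ S' := (Finset.mem_sdiff.mp hvD).2
    have hSins : S = insert v S' := by
      ext x
      simp only [Finset.mem_insert]
      constructor
      · intro hx
        by_cases h : x ∈ S'
        · exact Or.inr h
        · left
          have hx2 : x ∈ S \ S' := Finset.mem_sdiff.mpr ⟨hx, h⟩
          rw [hDv] at hx2
          exact Finset.mem_singleton.mp hx2
      · rintro (rfl | h)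
        · exact hvS
        · exact hsub h
    have hdegv : k + 1 ≤ G.degree v := by
      by_contra hlt
      have hdk : G.degree v = k := le_antisymm (by omega) (hdeg v)
      have hvcut : IsCut G k {v} :=
        ⟨Finset.singleton_nonempty v, hneu v, by rw [cut_singleton]; exact hdk⟩
      have hrv : r ∉ ({v} : Finset V) := by
        simp only [Finset.mem_singleton]
        rintro rfl
        exact hrS hvS
      have hvlam : ∀ A ∈ L, {v} ⊆ A ∨ A ⊆ {v} ∨ {v} ∩ A = ∅ := by
        intro A hA
        by_cases h : v ∈ A
        · exact Or.inl (Finset.singleton_subset_iff.mpr h)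
        · exact Or.inr (Or.inr (Finset.singleton_inter_of_notMem h))
      have hvL := hmax {v} hvcut hrv hvlam
      have hvss : ({v} : Finset V) ⊂ S := by
        refine Finset.ssubset_iff_subset_ne.mpr ⟨Finset.singleton_subset_iff.mpr hvS, fun h => ?_⟩
        obtain ⟨u, hu⟩ := hcutS'.1
        have hu2 : u ∈ ({v} : Finset V) := h ▸ hsub hu
        rw [Finset.mem_singleton] at hu2
        exact hvS' (hu2 ▸ hu)
      exact hvS' (childSub {v} hvL hvss (Finset.mem_singleton_self v))
    have hshores : SnugShores G k r v S' S :=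
      ⟨⟨hcutS'.1, hcutS'.2.1, hcutS'.2.2⟩, ⟨hcutS.1, hcutS.2.1, hcutS.2.2⟩,
        hrS', hrS, hvS', hSins⟩
    exact ⟨v, hDv, hdegv,
      ⟨fun h => hrS (h ▸ hvS), hdegv, S', S, hshores⟩, hshores⟩
end

section
/- Let k ≥ 1, let G be a minimally k-edge-connected finite simple graph on V with |V| ≥ 2, fix a root r ∈ V, and let n_k(G) denote the number of vertices of G of degree k. Then the number of vertices of V that are not snug (this set includes r) is strictly less than 4·n_k(G). -/
open Finset

variable {V : Type*} [Fintype V] [DecidableEq V]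

set_option linter.unusedSectionVars false

/-! ### Basic lemmas on crossing edges -/

lemma crosses_sym2 (S : Finset V) (x y : V) :
    Crosses S s(x, y) ↔ ¬(x ∈ S ↔ y ∈ S) := by
  constructor
  · rintro ⟨a, b, hab, ha, hb⟩
    rw [Sym2.eq_iff] at hab
    rcases hab with ⟨rfl, rfl⟩ | ⟨rfl, rfl⟩ <;> tauto
  · intro h
    by_cases hx : x ∈ S
    · exact ⟨x, y, rfl, hx, fun hy => h ⟨fun _ => hy, fun _ => hx⟩⟩
    · exact ⟨y, x, Sym2.eq_swap ▸ rfl, by tauto, hx⟩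

variable (G : SimpleGraph V) [DecidableRel G.Adj]

lemma mem_cutEdges {S : Finset V} {x y : V} :
    s(x, y) ∈ cutEdges G S ↔ G.Adj x y ∧ ¬(x ∈ S ↔ y ∈ S) := by
  simp [cutEdges, crosses_sym2, SimpleGraph.mem_edgeFinset]

lemma mem_cutEdges_of {S : Finset V} {x y : V} (h : G.Adj x y)
    (hx : x ∈ S) (hy : y ∉ S) : s(x, y) ∈ cutEdges G S :=
  (mem_cutEdges G).mpr ⟨h, by tauto⟩

lemma mem_incFinset {v x y : V} :
    s(x, y) ∈ G.incidenceFinset v ↔ G.Adj x y ∧ (v = x ∨ v = y) := by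
  rw [SimpleGraph.mem_incidenceFinset, SimpleGraph.mk'_mem_incidenceSet_iff]

lemma inc_elim {v : V} {e : Sym2 V} (he : e ∈ G.incidenceFinset v) :
    ∃ w, G.Adj v w ∧ e = s(v, w) := by
  induction e using Sym2.ind with
  | _ x y =>
    rw [mem_incFinset] at he
    obtain ⟨hadj, h | h⟩ := he
    · subst h; exact ⟨y, hadj, rfl⟩
    · subst h; exact ⟨x, hadj.symm, Sym2.eq_swap⟩

lemma submod (A B : Finset V) :
    (cutEdges G (A ∩ B)).card + (cutEdges G (A ∪ B)).card ≤
      (cutEdges G A).card + (cutEdges G B).card := by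
  classical
  simp only [cutEdges, Finset.card_filter]
  rw [← Finset.sum_add_distrib, ← Finset.sum_add_distrib]
  refine Finset.sum_le_sum ?_
  intro e he
  induction e using Sym2.ind with
  | _ x y =>
    simp only [crosses_sym2, Finset.mem_inter, Finset.mem_union]
    by_cases h1 : x ∈ A <;> by_cases h2 : y ∈ A <;>
      by_cases h3 : x ∈ B <;> by_cases h4 : y ∈ B <;> simp [h1, h2, h3, h4]

lemma posimod (A B : Finset V) :
    (cutEdges G (A \ B)).card + (cutEdges G (B \ A)).card ≤
      (cutEdges G A).card + (cutEdges G B).card := by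
  classical
  simp only [cutEdges, Finset.card_filter]
  rw [← Finset.sum_add_distrib, ← Finset.sum_add_distrib]
  refine Finset.sum_le_sum ?_
  intro e he
  induction e using Sym2.ind with
  | _ x y =>
    simp only [crosses_sym2, Finset.mem_sdiff]
    by_cases h1 : x ∈ A <;> by_cases h2 : y ∈ A <;>
      by_cases h3 : x ∈ B <;> by_cases h4 : y ∈ B <;> simp [h1, h2, h3, h4]

lemma cutEdges_compl (S : Finset V) : cutEdges G Sᶜ = cutEdges G S := by
  unfold cutEdges
  apply Finset.filter_congr
  intro e he
  induction e using Sym2.ind with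
  | _ x y => simp only [crosses_sym2, Finset.mem_compl]; tauto

lemma cutEdges_singleton_card (v : V) : (cutEdges G {v}).card = G.degree v := by
  rw [← SimpleGraph.card_incidenceFinset_eq_degree]
  congr 1
  ext e
  induction e using Sym2.ind with
  | _ x y =>
    rw [mem_cutEdges, mem_incFinset]
    constructor
    · rintro ⟨ha, hb⟩
      simp only [Finset.mem_singleton] at hb
      exact ⟨ha, by tauto⟩
    · rintro ⟨ha, hb⟩
      have hne : x ≠ y := ha.ne
      simp only [Finset.mem_singleton]
      refine ⟨ha, ?_⟩
      rcases hb with rfl | rfl <;> tauto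

lemma sum_deg_eq (Q : Finset V) (hQ : ∀ u ∈ Q, ∀ v ∈ Q, ¬ G.Adj u v) :
    ∑ v ∈ Q, G.degree v = (Q.biUnion (fun v => G.incidenceFinset v)).card := by
  rw [Finset.card_biUnion]
  · simp
  · intro u hu v hv huv
    rw [Function.onFun, Finset.disjoint_left]
    intro e heu hev
    obtain ⟨w, hw, rfl⟩ := inc_elim G heu
    obtain ⟨w', hw', he'⟩ := inc_elim G hev
    rw [Sym2.eq_iff] at he'
    rcases he' with ⟨rfl, rfl⟩ | ⟨h1, h2⟩
    · exact huv rfl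
    · exact hQ u hu v hv (h2 ▸ hw)

/-! ### Good cuts: k-cuts avoiding the root -/

def Good (G : SimpleGraph V) [DecidableRel G.Adj] (k : ℕ) (r : V)
    (S : Finset V) : Prop :=
  S.Nonempty ∧ r ∉ S ∧ (cutEdges G S).card = k

variable {G} {k : ℕ} {r : V}

lemma Good.ne_univ {S : Finset V} (h : Good G k r S) : S ≠ univ :=
  fun he => h.2.1 (he ▸ Finset.mem_univ r)

lemma Good.isCut {S : Finset V} (h : Good G k r S) : IsCut G k S :=
  ⟨h.1, h.ne_univ, h.2.2⟩

lemma cut_lower (hG : EdgeConnected G k) {S : Finset V}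
    (hS : S.Nonempty) (hr : r ∉ S) : k ≤ (cutEdges G S).card :=
  hG S hS (fun he => hr (he ▸ Finset.mem_univ r))

lemma degree_lower (hG : EdgeConnected G k) (hV : 2 ≤ Fintype.card V) (v : V) :
    k ≤ G.degree v := by
  obtain ⟨w, hw⟩ := Fintype.exists_ne_of_one_lt_card (by omega) v
  rw [← cutEdges_singleton_card]
  exact hG {v} ⟨v, Finset.mem_singleton_self v⟩
    (fun he => hw (by rw [← Finset.mem_singleton, he]; exact Finset.mem_univ w))

lemma good_inter (hG : EdgeConnected G k) {A B : Finset V}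
    (hA : Good G k r A) (hB : Good G k r B) (hAB : (A ∩ B).Nonempty) :
    Good G k r (A ∩ B) ∧ Good G k r (A ∪ B) := by
  have hrAB : r ∉ A ∩ B := fun h => hA.2.1 (Finset.mem_inter.mp h).1
  have hrU : r ∉ A ∪ B := fun h => by
    rcases Finset.mem_union.mp h with h | h
    · exact hA.2.1 h
    · exact hB.2.1 h
  have hUn : (A ∪ B).Nonempty := hAB.mono (Finset.inter_subset_union)
  have h1 : k ≤ (cutEdges G (A ∩ B)).card := cut_lower hG hAB hrAB
  have h2 : k ≤ (cutEdges G (A ∪ B)).card := cut_lower hG hUn hrU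
  have h3 := submod G A B
  rw [hA.2.2, hB.2.2] at h3
  exact ⟨⟨hAB, hrAB, by omega⟩, ⟨hUn, hrU, by omega⟩⟩

lemma good_sdiff (hG : EdgeConnected G k) {A B : Finset V}
    (hA : Good G k r A) (hB : Good G k r B)
    (h1 : (A \ B).Nonempty) (h2 : (B \ A).Nonempty) :
    Good G k r (A \ B) := by
  have hr1 : r ∉ A \ B := fun h => hA.2.1 (Finset.mem_sdiff.mp h).1
  have hr2 : r ∉ B \ A := fun h => hB.2.1 (Finset.mem_sdiff.mp h).1
  have g1 : k ≤ (cutEdges G (A \ B)).card := cut_lower hG h1 hr1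
  have g2 : k ≤ (cutEdges G (B \ A)).card := cut_lower hG h2 hr2
  have h3 := posimod G A B
  rw [hA.2.2, hB.2.2] at h3
  exact ⟨h1, hr1, by omega⟩

lemma exists_good_crossing
    (hmin : ∀ e ∈ G.edgeSet, ∃ S : Finset V, IsCut G k S ∧ Crosses S e)
    {x y : V} (hxy : G.Adj x y) :
    ∃ S, Good G k r S ∧ ((x ∈ S ∧ y ∉ S) ∨ (y ∈ S ∧ x ∉ S)) := by
  obtain ⟨S, hS, hcr⟩ := hmin s(x, y) (G.mem_edgeSet.mpr hxy)
  rw [crosses_sym2] at hcr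
  by_cases hr : r ∈ S
  · refine ⟨Sᶜ, ⟨?_, by simp [hr], by rw [cutEdges_compl]; exact hS.2.2⟩, ?_⟩
    · exact Finset.nonempty_iff_ne_empty.mpr
        (fun he => hS.2.1 ((Finset.compl_eq_empty_iff S).mp he))
    · simp only [Finset.mem_compl]
      tauto
  · exact ⟨S, ⟨hS.1, hr, hS.2.2⟩, by tauto⟩

lemma exists_edge_inside (hk : 1 ≤ k) (hG : EdgeConnected G k)
    (hV : 2 ≤ Fintype.card V) {A : Finset V}
    (hA : Good G k r A) (hcard : 1 < A.card) :
    ∃ x ∈ A, ∃ y ∈ A, G.Adj x y := by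
  by_contra hno
  push_neg at hno
  have hQ : ∀ u ∈ A, ∀ v ∈ A, ¬ G.Adj u v := hno
  have hsub : A.biUnion (fun v => G.incidenceFinset v) ⊆ cutEdges G A := by
    intro e he
    obtain ⟨v, hv, hev⟩ := Finset.mem_biUnion.mp he
    obtain ⟨w, hw, rfl⟩ := inc_elim G hev
    have hwA : w ∉ A := fun hwA => hQ v hv w hwA hw
    exact mem_cutEdges_of G hw hv hwA
  have h1 : ∑ v ∈ A, G.degree v ≤ k := by
    rw [sum_deg_eq G A hQ, ← hA.2.2]
    exact Finset.card_le_card hsub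
  have h2 : A.card * k ≤ ∑ v ∈ A, G.degree v := by
    calc A.card * k = ∑ _v ∈ A, k := by rw [Finset.sum_const, smul_eq_mul]
    _ ≤ ∑ v ∈ A, G.degree v := Finset.sum_le_sum (fun v _ => degree_lower hG hV v)
  have : 2 * k ≤ A.card * k := Nat.mul_le_mul_right k hcard
  omega

lemma exists_sub_cut (hk : 1 ≤ k) (hG : EdgeConnected G k)
    (hV : 2 ≤ Fintype.card V)
    (hmin : ∀ e ∈ G.edgeSet, ∃ S : Finset V, IsCut G k S ∧ Crosses S e)
    {A : Finset V} (hA : Good G k r A) (hcard : 1 < A.card) :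
    ∃ B, Good G k r B ∧ B ⊂ A := by
  obtain ⟨x, hx, y, hy, hxy⟩ := exists_edge_inside hk hG hV hA hcard
  obtain ⟨T, hT, hor⟩ := exists_good_crossing (r := r) hmin hxy
  have key : ∀ a b : V, a ∈ A → b ∈ A → a ∈ T → b ∉ T →
      ∃ B, Good G k r B ∧ B ⊂ A := by
    intro a b haA hbA haT hbT
    by_cases hTA : T ⊆ A
    · exact ⟨T, hT, Finset.ssubset_iff_of_subset hTA |>.mpr ⟨b, hbA, hbT⟩⟩
    · have hTdiff : (T \ A).Nonempty := by
        rw [Finset.sdiff_nonempty]; exact hTA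
      have hAdiff : (A \ T).Nonempty := ⟨b, Finset.mem_sdiff.mpr ⟨hbA, hbT⟩⟩
      refine ⟨A \ T, good_sdiff hG hA hT hAdiff hTdiff, ?_⟩
      refine (Finset.ssubset_iff_of_subset (Finset.sdiff_subset)).mpr ?_
      exact ⟨a, haA, by simp [haT]⟩
  rcases hor with ⟨h1, h2⟩ | ⟨h1, h2⟩
  · exact key x y hx hy h1 h2
  · exact key y x hy hx h1 h2

lemma exists_minimal_good (hG : EdgeConnected G k) {v : V}
    (h : ∃ S, Good G k r S ∧ v ∈ S) :
    ∃ M, Good G k r M ∧ v ∈ M ∧ ∀ S, Good G k r S → v ∈ S → M ⊆ S := by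
  classical
  set F : Finset (Finset V) :=
    Finset.univ.filter (fun S => Good G k r S ∧ v ∈ S) with hF
  have hFne : F.Nonempty := by
    obtain ⟨S, hS⟩ := h
    exact ⟨S, by simp [hF, hS.1, hS.2]⟩
  obtain ⟨M, hMF, hMmin⟩ := F.exists_min_image Finset.card hFne
  simp only [hF, Finset.mem_filter, Finset.mem_univ, true_and] at hMF
  refine ⟨M, hMF.1, hMF.2, ?_⟩
  intro S hS hvS
  have hMS : Good G k r (M ∩ S) ∧ _ :=
    good_inter hG hMF.1 hS ⟨v, Finset.mem_inter.mpr ⟨hMF.2, hvS⟩⟩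
  have hmem : M ∩ S ∈ F := by
    simp only [hF, Finset.mem_filter, Finset.mem_univ, true_and]
    exact ⟨hMS.1, Finset.mem_inter.mpr ⟨hMF.2, hvS⟩⟩
  have hle := hMmin _ hmem
  have heq : M ∩ S = M :=
    Finset.eq_of_subset_of_card_le (Finset.inter_subset_left) hle
  intro a ha
  exact (Finset.mem_inter.mp (heq ▸ ha)).2

/-! ### Laminar family counting -/

section Laminar
open scoped Classical

variable (F : Finset (Finset V))

def Cov (B A : Finset V) : Prop := B ⊂ A ∧ ¬ ∃ D ∈ F, B ⊂ D ∧ D ⊂ A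

noncomputable def maxl : Finset (Finset V) :=
  F.filter (fun A => ¬ ∃ B ∈ F, A ⊂ B)

noncomputable def minl : Finset (Finset V) :=
  F.filter (fun A => ¬ ∃ B ∈ F, B ⊂ A)

noncomputable def nchild (A : Finset V) : ℕ :=
  (F.filter (fun C => Cov F C A)).card

lemma exists_max_superset {L : Finset V} (hL : L ∈ F) :
    ∃ A ∈ maxl F, L ⊆ A := by
  classical
  obtain ⟨A, hA, hmax⟩ := (F.filter (fun C => L ⊆ C)).exists_max_image
    Finset.card ⟨L, by simp [hL]⟩
  simp only [Finset.mem_filter] at hA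
  refine ⟨A, ?_, hA.2⟩
  simp only [maxl, Finset.mem_filter]
  refine ⟨hA.1, ?_⟩
  rintro ⟨B, hB, hAB⟩
  have hBF : B ∈ F.filter (fun C => L ⊆ C) := by
    simp only [Finset.mem_filter]
    exact ⟨hB, hA.2.trans hAB.subset⟩
  exact absurd (hmax B hBF) (by simpa using Finset.card_lt_card hAB)

lemma exists_child_above {L A : Finset V} (hL : L ∈ F) (hLA : L ⊂ A) :
    ∃ C ∈ F, Cov F C A ∧ L ⊆ C := by
  classical
  obtain ⟨C, hC, hmax⟩ := (F.filter (fun C => L ⊆ C ∧ C ⊂ A)).exists_max_image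
    Finset.card ⟨L, by simp [hL, hLA]⟩
  simp only [Finset.mem_filter] at hC
  refine ⟨C, hC.1, ⟨hC.2.2, ?_⟩, hC.2.1⟩
  rintro ⟨D, hD, hCD, hDA⟩
  have hDF : D ∈ F.filter (fun C => L ⊆ C ∧ C ⊂ A) := by
    simp only [Finset.mem_filter]
    exact ⟨hD, hC.2.1.trans hCD.subset, hDA⟩
  exact absurd (hmax D hDF) (by simpa using Finset.card_lt_card hCD)

variable {F}

lemma parent_unique
    (hlam : ∀ A ∈ F, ∀ B ∈ F, (A ∩ B).Nonempty → A ⊆ B ∨ B ⊆ A)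
    {B A A' : Finset V} (hBne : B.Nonempty) (hA : A ∈ F) (hA' : A' ∈ F)
    (h1 : Cov F B A) (h2 : Cov F B A') : A = A' := by
  have hint : (A ∩ A').Nonempty := by
    obtain ⟨b, hb⟩ := hBne
    exact ⟨b, Finset.mem_inter.mpr ⟨h1.1.subset hb, h2.1.subset hb⟩⟩
  rcases hlam A hA A' hA' hint with h | h
  · by_contra hne
    exact h2.2 ⟨A, hA, h1.1, Finset.ssubset_iff_subset_ne.mpr ⟨h, hne⟩⟩
  · by_contra hne
    exact h1.2 ⟨A', hA', h2.1, Finset.ssubset_iff_subset_ne.mpr ⟨h, fun e => hne e.symm⟩⟩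

lemma laminar_count
    (hlam : ∀ A ∈ F, ∀ B ∈ F, (A ∩ B).Nonempty → A ⊆ B ∨ B ⊆ A)
    (hne : ∀ A ∈ F, A.Nonempty) :
    (∑ A ∈ F.filter (fun A => 2 ≤ nchild F A), nchild F A) + 2 * (maxl F).card
      ≤ 2 * (minl F).card := by
  classical
  set nonmax : Finset (Finset V) := F.filter (fun B => ∃ A ∈ F, B ⊂ A) with hnm
  have e1 : nonmax.card + (maxl F).card = F.card := by
    rw [hnm, maxl]
    exact Finset.card_filter_add_card_filter_not _
  have hpar : ∀ B ∈ nonmax, ∃ A, A ∈ F ∧ Cov F B A := by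
    intro B hB
    simp only [hnm, Finset.mem_filter] at hB
    obtain ⟨A, hA, hmin⟩ := (F.filter (fun A => B ⊂ A)).exists_min_image
      Finset.card (by obtain ⟨A0, h1, h2⟩ := hB.2; exact ⟨A0, by simp [h1, h2]⟩)
    simp only [Finset.mem_filter] at hA
    refine ⟨A, hA.1, hA.2, ?_⟩
    rintro ⟨D, hD, hBD, hDA⟩
    have hDF : D ∈ F.filter (fun A => B ⊂ A) := by simp [hD, hBD]
    exact absurd (hmin D hDF) (by simpa using Finset.card_lt_card hDA)
  set f : Finset V → Finset V := fun B =>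
    if h : ∃ A, A ∈ F ∧ Cov F B A then h.choose else ∅ with hf
  have hfspec : ∀ B ∈ nonmax, f B ∈ F ∧ Cov F B (f B) := by
    intro B hB
    have h := hpar B hB
    rw [hf]
    simp only [dif_pos h]
    exact h.choose_spec
  have e2 : nonmax.card = ∑ A ∈ F, (nonmax.filter (fun B => f B = A)).card :=
    Finset.card_eq_sum_card_fiberwise (fun B hB => (hfspec B hB).1)
  have e3 : ∀ A ∈ F, (nonmax.filter (fun B => f B = A)).card = nchild F A := by
    intro A hA
    rw [nchild]
    congr 1
    ext B
    simp only [Finset.mem_filter, hnm]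
    constructor
    · rintro ⟨⟨hBF, hex⟩, hfB⟩
      have := hfspec B (by simp [hnm, hBF, hex])
      rw [hfB] at this
      exact ⟨hBF, this.2⟩
    · rintro ⟨hBF, hcov⟩
      have hBnm : B ∈ nonmax := by simp [hnm, hBF]; exact ⟨A, hA, hcov.1⟩
      have hsp := hfspec B hBnm
      have : f B = A := parent_unique hlam (hne B hBF) hsp.1 hA hsp.2 hcov
      simp only [hnm, Finset.mem_filter] at hBnm
      exact ⟨hBnm, this⟩
  have e2' : nonmax.card = ∑ A ∈ F, nchild F A :=
    e2.trans (Finset.sum_congr rfl e3)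
  -- minimal elements have no children; others have at least one
  have e4 : ∀ A ∈ minl F, nchild F A = 0 := by
    intro A hA
    simp only [minl, Finset.mem_filter] at hA
    rw [nchild, Finset.card_eq_zero]
    rw [Finset.filter_eq_empty_iff]
    intro C hC hcov
    exact hA.2 ⟨C, hC, hcov.1⟩
  have e5 : ∀ A ∈ F \ minl F, 1 ≤ nchild F A := by
    intro A hA
    rw [Finset.mem_sdiff] at hA
    have : ∃ B ∈ F, B ⊂ A := by
      by_contra hcon
      exact hA.2 (by simp only [minl, Finset.mem_filter]; exact ⟨hA.1, hcon⟩)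
    obtain ⟨B, hB, hBA⟩ := this
    obtain ⟨C, hC, hcov, _⟩ := exists_child_above F hB hBA
    rw [nchild]
    exact Finset.card_pos.mpr ⟨C, by simp [hC, hcov]⟩
  -- split the sums
  have hminsub : minl F ⊆ F := Finset.filter_subset _ _
  have hsplit1 : ∑ A ∈ F \ minl F, nchild F A + ∑ A ∈ minl F, nchild F A
      = ∑ A ∈ F, nchild F A := Finset.sum_sdiff hminsub
  have hzero : ∑ A ∈ minl F, nchild F A = 0 :=
    Finset.sum_eq_zero e4
  set S2 : Finset (Finset V) := F.filter (fun A => 2 ≤ nchild F A) with hS2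
  have hS2sub : S2 ⊆ F \ minl F := by
    intro A hA
    simp only [hS2, Finset.mem_filter] at hA
    rw [Finset.mem_sdiff]
    refine ⟨hA.1, fun hmin => ?_⟩
    rw [e4 A hmin] at hA
    omega
  have hsplit2 : ∑ A ∈ (F \ minl F) \ S2, nchild F A + ∑ A ∈ S2, nchild F A
      = ∑ A ∈ F \ minl F, nchild F A := Finset.sum_sdiff hS2sub
  have hb1 : ((F \ minl F) \ S2).card ≤ ∑ A ∈ (F \ minl F) \ S2, nchild F A := by
    calc ((F \ minl F) \ S2).card = ∑ _A ∈ (F \ minl F) \ S2, 1 := by simp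
    _ ≤ _ := Finset.sum_le_sum (fun A hA =>
        e5 A (Finset.mem_sdiff.mp hA).1)
  have hb2 : 2 * S2.card ≤ ∑ A ∈ S2, nchild F A := by
    calc 2 * S2.card = ∑ _A ∈ S2, 2 := by rw [Finset.sum_const, smul_eq_mul, mul_comm]
    _ ≤ _ := Finset.sum_le_sum (fun A hA => (Finset.mem_filter.mp hA).2)
  have hc1 : ((F \ minl F) \ S2).card + S2.card = (F \ minl F).card :=
    Finset.card_sdiff_add_card_eq_card hS2sub
  have hc2 : (F \ minl F).card + (minl F).card = F.card :=
    Finset.card_sdiff_add_card_eq_card hminsub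
  omega
end Laminar

/-! ### Main theorem -/

/-- The number of non-snug vertices is less than four times the number of
vertices of degree `k`. -/
theorem num_non_snug_lt
    (k : ℕ) (hk : 1 ≤ k) (hV : 2 ≤ Fintype.card V)
    (G : SimpleGraph V) [DecidableRel G.Adj] (hG : EdgeConnected G k)
    (hmin : ∀ e ∈ G.edgeSet, ∃ S : Finset V, IsCut G k S ∧ Crosses S e)
    (r : V) :
    {v : V | ¬ Snug G k r v}.ncard < 4 * {v : V | G.degree v = k}.ncard := by
  classical
  have hdeg : ∀ v, k ≤ G.degree v := degree_lower hG hV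
  -- Finset versions
  set Vk : Finset V := univ.filter (fun v => G.degree v = k) with hVkdef
  set Nf : Finset V := univ.filter (fun v => ¬ Snug G k r v) with hNfdef
  have hncard1 : {v : V | ¬ Snug G k r v}.ncard = Nf.card := by
    rw [Set.ncard_eq_toFinset_card']
    congr 1
    ext v
    simp [hNfdef]
  have hncard2 : {v : V | G.degree v = k}.ncard = Vk.card := by
    rw [Set.ncard_eq_toFinset_card']
    congr 1
    ext v
    simp [hVkdef]
  rw [hncard1, hncard2]
  -- the minimal good cut containing each vertex
  set GA : V → Prop := fun v => ∃ S, Good G k r S ∧ v ∈ S with hGAdef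
  have exM : ∀ v : V, ∃ M : Finset V, GA v →
      (Good G k r M ∧ v ∈ M ∧ ∀ S, Good G k r S → v ∈ S → M ⊆ S) := by
    intro v
    by_cases h : GA v
    · obtain ⟨M, hM⟩ := exists_minimal_good hG h
      exact ⟨M, fun _ => hM⟩
    · exact ⟨∅, fun hc => absurd hc h⟩
  choose Mv hMv using exM
  have hMgood : ∀ v, GA v → Good G k r (Mv v) := fun v h => (hMv v h).1
  have hMmem : ∀ v, GA v → v ∈ Mv v := fun v h => (hMv v h).2.1
  have hMmin : ∀ v, GA v → ∀ S, Good G k r S → v ∈ S → Mv v ⊆ S :=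
    fun v h => (hMv v h).2.2
  have hGAr : ¬ GA r := fun ⟨S, hS, hrS⟩ => hS.2.1 hrS
  -- the laminar family
  set L : Finset (Finset V) := (univ.filter GA).image Mv with hLdef
  have hmemL : ∀ A : Finset V, A ∈ L ↔ ∃ v, GA v ∧ Mv v = A := by
    intro A
    simp [hLdef]
  have hLgood : ∀ A ∈ L, Good G k r A := by
    intro A hA
    obtain ⟨v, hv, rfl⟩ := (hmemL A).mp hA
    exact hMgood v hv
  have hLne : ∀ A ∈ L, A.Nonempty := fun A hA => (hLgood A hA).1
  have hGAofmem : ∀ A ∈ L, ∀ x ∈ A, GA x := by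
    intro A hA x hx
    exact ⟨A, hLgood A hA, hx⟩
  have hMsubA : ∀ A ∈ L, ∀ x ∈ A, Mv x ⊆ A := by
    intro A hA x hx
    exact hMmin x (hGAofmem A hA x hx) A (hLgood A hA) hx
  have hlam : ∀ A ∈ L, ∀ B ∈ L, (A ∩ B).Nonempty → A ⊆ B ∨ B ⊆ A := by
    intro A hA B hB hint
    obtain ⟨u, hu, rfl⟩ := (hmemL A).mp hA
    obtain ⟨v, hv, rfl⟩ := (hmemL B).mp hB
    by_cases huB : u ∈ Mv v
    · exact Or.inl (hMmin u hu _ (hMgood v hv) huB)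
    by_cases hvA : v ∈ Mv u
    · exact Or.inr (hMmin v hv _ (hMgood u hu) hvA)
    exfalso
    have h1 : (Mv u \ Mv v).Nonempty :=
      ⟨u, Finset.mem_sdiff.mpr ⟨hMmem u hu, huB⟩⟩
    have h2 : (Mv v \ Mv u).Nonempty :=
      ⟨v, Finset.mem_sdiff.mpr ⟨hMmem v hv, hvA⟩⟩
    have hgd : Good G k r (Mv u \ Mv v) :=
      good_sdiff hG (hMgood u hu) (hMgood v hv) h1 h2
    have hsub : Mv u ⊆ Mv u \ Mv v :=
      hMmin u hu _ hgd (Finset.mem_sdiff.mpr ⟨hMmem u hu, huB⟩)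
    obtain ⟨x, hx⟩ := hint
    rw [Finset.mem_inter] at hx
    exact (Finset.mem_sdiff.mp (hsub hx.1)).2 hx.2
  -- edges always touch the good region
  have hedgeGA : ∀ x y : V, G.Adj x y → GA x ∨ GA y := by
    intro x y hxy
    obtain ⟨S, hS, hor⟩ := exists_good_crossing (r := r) hmin hxy
    rcases hor with ⟨h1, _⟩ | ⟨h1, _⟩
    · exact Or.inl ⟨S, hS, h1⟩
    · exact Or.inr ⟨S, hS, h1⟩
  -- no edges inside a class
  have hclass : ∀ A ∈ L, ∀ u v : V, GA u → GA v → Mv u = A → Mv v = A →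
      ¬ G.Adj u v := by
    intro A hA u v hu hv hMu hMvv hadj
    obtain ⟨S, hS, hor⟩ := exists_good_crossing (r := r) hmin hadj
    have key : ∀ a b : V, GA a → GA b → Mv a = A → Mv b = A →
        a ∈ S → b ∉ S → False := by
      intro a b ha hb hMa hMb haS hbS
      have haA : a ∈ A := hMa ▸ hMmem a ha
      have hbA : b ∈ A := hMb ▸ hMmem b hb
      have hSA := good_inter hG hS (hLgood A hA)
        ⟨a, Finset.mem_inter.mpr ⟨haS, haA⟩⟩
      have hsub : Mv a ⊆ S ∩ A :=
        hMmin a ha _ hSA.1 (Finset.mem_inter.mpr ⟨haS, haA⟩)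
      rw [hMa] at hsub
      exact hbS (Finset.mem_inter.mp (hsub hbA)).1
    rcases hor with ⟨h1, h2⟩ | ⟨h1, h2⟩
    · exact key u v hu hv hMu hMvv h1 h2
    · exact key v u hv hu hMvv hMu h1 h2
  -- degree at least k+1 for generators of non-singleton cuts
  have hsingleton_good : ∀ v : V, v ≠ r → G.degree v = k → Good G k r {v} := by
    intro v hvr hdv
    refine ⟨Finset.singleton_nonempty v, ?_, ?_⟩
    · intro h
      rw [Finset.mem_singleton] at h
      exact hvr h.symm
    · rw [cutEdges_singleton_card]; exact hdv
  have hdegk1 : ∀ v, GA v → 1 < (Mv v).card → k + 1 ≤ G.degree v := by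
    intro v hv hcard
    rcases Nat.eq_or_lt_of_le (hdeg v) with heq | hlt
    · exfalso
      have hvr : v ≠ r := fun e => (hMgood v hv).2.1 (e ▸ hMmem v hv)
      have hgood : Good G k r {v} := hsingleton_good v hvr heq.symm
      have hsub := hMmin v hv {v} hgood (Finset.mem_singleton_self v)
      have := Finset.card_le_card hsub
      simp only [Finset.card_singleton] at this
      omega
    · omega
  -- the root region
  set Rf : Finset V := univ.filter (fun v => ¬ GA v) with hRfdef
  have hrRf : r ∈ Rf := by simp [hRfdef, hGAr]
  have hRnoedge : ∀ u ∈ Rf, ∀ v ∈ Rf, ¬ G.Adj u v := by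
    intro u hu v hv hadj
    rw [hRfdef, Finset.mem_filter] at hu hv
    rcases hedgeGA u v hadj with h | h
    · exact hu.2 h
    · exact hv.2 h
  have hRdegk1 : ∀ v ∈ Rf, v ≠ r → k + 1 ≤ G.degree v := by
    intro v hv hvr
    rw [hRfdef, Finset.mem_filter] at hv
    rcases Nat.eq_or_lt_of_le (hdeg v) with heq | hlt
    · exact absurd ⟨{v}, hsingleton_good v hvr heq.symm,
        Finset.mem_singleton_self v⟩ hv.2
    · omega
  -- R is dominated by the maximal cuts
  have hRsub : Rf.biUnion (fun v => G.incidenceFinset v) ⊆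
      (maxl L).biUnion (fun A => cutEdges G A) := by
    intro e he
    obtain ⟨v, hvR, hev⟩ := Finset.mem_biUnion.mp he
    obtain ⟨w, hw, rfl⟩ := inc_elim G hev
    have hvGA : ¬ GA v := (Finset.mem_filter.mp hvR).2
    have hwGA : GA w := (hedgeGA v w hw).resolve_left hvGA
    have hMwL : Mv w ∈ L := (hmemL (Mv w)).mpr ⟨w, hwGA, rfl⟩
    obtain ⟨A, hAm, hMwA⟩ := exists_max_superset L hMwL
    have hAL : A ∈ L := Finset.mem_of_mem_filter A hAm
    refine Finset.mem_biUnion.mpr ⟨A, hAm, ?_⟩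
    have hwA : w ∈ A := hMwA (hMmem w hwGA)
    have hvA : v ∉ A := fun h => hvGA ⟨A, hLgood A hAL, h⟩
    exact (mem_cutEdges G).mpr ⟨hw, by tauto⟩
  have hRm : Rf.card ≤ (maxl L).card := by
    set m := (maxl L).card with hm
    have hupper : ∑ v ∈ Rf, G.degree v ≤ m * k := by
      rw [sum_deg_eq G Rf hRnoedge]
      calc (Rf.biUnion (fun v => G.incidenceFinset v)).card
          ≤ ((maxl L).biUnion (fun A => cutEdges G A)).card :=
            Finset.card_le_card hRsub
        _ ≤ ∑ A ∈ maxl L, (cutEdges G A).card := Finset.card_biUnion_le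
        _ = ∑ _A ∈ maxl L, k := by
            refine Finset.sum_congr rfl (fun A hA => ?_)
            exact (hLgood A (Finset.mem_of_mem_filter A hA)).2.2
        _ = m * k := by rw [Finset.sum_const, smul_eq_mul]
    have hlower : (Rf.card - 1) * (k + 1) + k ≤ ∑ v ∈ Rf, G.degree v := by
      rw [← Finset.add_sum_erase _ _ hrRf]
      have h1 : (Rf.card - 1) * (k + 1) ≤ ∑ v ∈ Rf.erase r, G.degree v := by
        rw [← Finset.card_erase_of_mem hrRf]
        calc (Rf.erase r).card * (k + 1) = ∑ _v ∈ Rf.erase r, (k+1) := by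
              rw [Finset.sum_const, smul_eq_mul]
          _ ≤ _ := Finset.sum_le_sum (fun v hv =>
              hRdegk1 v (Finset.mem_of_mem_erase hv) (Finset.ne_of_mem_erase hv))
      have h2 : k ≤ G.degree r := hdeg r
      omega
    by_contra hcon
    push_neg at hcon
    have hmle : m ≤ Rf.card - 1 := by omega
    have h3 : m * (k + 1) ≤ (Rf.card - 1) * (k + 1) :=
      Nat.mul_le_mul_right _ hmle
    have h4 : m * (k + 1) + k ≤ m * k := by omega
    rw [Nat.mul_succ] at h4
    omega
  -- generators
  set gens : Finset V → Finset V :=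
    fun A => univ.filter (fun v => GA v ∧ Mv v = A) with hgensdef
  have hgensmem : ∀ A v, v ∈ gens A ↔ GA v ∧ Mv v = A := by
    intro A v
    simp [hgensdef]
  have hgensA : ∀ A, gens A ⊆ A := by
    intro A v hv
    rw [hgensmem] at hv
    exact hv.2 ▸ hMmem v hv.1
  have hgensnoedge : ∀ A ∈ L, ∀ u ∈ gens A, ∀ v ∈ gens A, ¬ G.Adj u v := by
    intro A hA u hu v hv
    rw [hgensmem] at hu hv
    exact hclass A hA u v hu.1 hv.1 hu.2 hv.2
  have halpha : ∀ A ∈ L, 1 < A.card → (gens A).card ≤ nchild L A := by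
    intro A hA hcard
    set ch : Finset (Finset V) := L.filter (fun C => Cov L C A) with hchdef
    have hsub : (gens A).biUnion (fun v => G.incidenceFinset v) ⊆
        cutEdges G A ∪ ch.biUnion (fun C => cutEdges G C) := by
      intro e he
      obtain ⟨v, hvg, hev⟩ := Finset.mem_biUnion.mp he
      obtain ⟨w, hw, rfl⟩ := inc_elim G hev
      have hvA : v ∈ A := hgensA A hvg
      by_cases hwA : w ∈ A
      · have hwGA : GA w := ⟨A, hLgood A hA, hwA⟩
        have hMwA : Mv w ⊆ A := hMmin w hwGA A (hLgood A hA) hwA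
        have hMwne : Mv w ≠ A := by
          intro hMw
          exact hgensnoedge A hA v hvg w ((hgensmem A w).mpr ⟨hwGA, hMw⟩) hw
        have hMwL : Mv w ∈ L := (hmemL (Mv w)).mpr ⟨w, hwGA, rfl⟩
        obtain ⟨C, hCL, hcov, hMC⟩ :=
          exists_child_above L hMwL (Finset.ssubset_iff_subset_ne.mpr ⟨hMwA, hMwne⟩)
        have hwC : w ∈ C := hMC (hMmem w hwGA)
        have hvC : v ∉ C := by
          intro hvC
          have hvGA : GA v := ((hgensmem A v).mp hvg).1
          have hAC : A ⊆ C := by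
            rw [← ((hgensmem A v).mp hvg).2]
            exact hMmin v hvGA C (hLgood C hCL) hvC
          exact ssubset_irrefl C (hcov.1.trans_subset hAC)
        refine Finset.mem_union_right _ (Finset.mem_biUnion.mpr ⟨C, ?_, ?_⟩)
        · rw [hchdef, Finset.mem_filter]; exact ⟨hCL, hcov⟩
        · exact (mem_cutEdges G).mpr ⟨hw, by tauto⟩
      · exact Finset.mem_union_left _ (mem_cutEdges_of G hw hvA hwA)
    have h1 : ∑ v ∈ gens A, G.degree v ≤ k + (nchild L A) * k := by
      rw [sum_deg_eq G (gens A) (hgensnoedge A hA)]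
      calc ((gens A).biUnion (fun v => G.incidenceFinset v)).card
          ≤ (cutEdges G A ∪ ch.biUnion (fun C => cutEdges G C)).card :=
            Finset.card_le_card hsub
        _ ≤ (cutEdges G A).card + (ch.biUnion (fun C => cutEdges G C)).card :=
            Finset.card_union_le _ _
        _ ≤ (cutEdges G A).card + ∑ C ∈ ch, (cutEdges G C).card :=
            Nat.add_le_add_left Finset.card_biUnion_le _
        _ = k + (nchild L A) * k := by
            rw [(hLgood A hA).2.2]
            congr 1
            calc ∑ C ∈ ch, (cutEdges G C).card = ∑ _C ∈ ch, k := by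
                  refine Finset.sum_congr rfl (fun C hC => ?_)
                  rw [hchdef, Finset.mem_filter] at hC
                  exact (hLgood C hC.1).2.2
              _ = (nchild L A) * k := by
                  rw [Finset.sum_const, smul_eq_mul, nchild, ← hchdef]
    have h2 : (gens A).card * (k + 1) ≤ ∑ v ∈ gens A, G.degree v := by
      calc (gens A).card * (k + 1) = ∑ _v ∈ gens A, (k + 1) := by
            rw [Finset.sum_const, smul_eq_mul]
        _ ≤ _ := by
            refine Finset.sum_le_sum (fun v hv => ?_)
            have hvm := (hgensmem A v).mp hv
            exact hdegk1 v hvm.1 (hvm.2.symm ▸ hcard)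
    by_contra hcon
    push_neg at hcon
    have h3 : (nchild L A + 1) * (k + 1) ≤ (gens A).card * (k + 1) :=
      Nat.mul_le_mul_right _ hcon
    have h4 : (nchild L A + 1) * (k + 1) ≤ k + nchild L A * k := by omega
    have h5 : (nchild L A + 1) * (k + 1)
        = nchild L A * k + (nchild L A + k + 1) := by ring
    omega
  -- minimal cuts are singletons of degree-k vertices
  have hminl : ∀ A ∈ minl L, ∃ x, A = {x} ∧ G.degree x = k := by
    intro A hAm
    have hAL : A ∈ L := Finset.mem_of_mem_filter A hAm
    have hg := hLgood A hAL
    rcases Nat.lt_or_ge 1 A.card with h1 | h1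
    · exfalso
      obtain ⟨B, hB, hBA⟩ := exists_sub_cut hk hG hV hmin hg h1
      obtain ⟨x, hx⟩ := hB.1
      have hxGA : GA x := ⟨B, hB, hx⟩
      have hMxB : Mv x ⊆ B := hMmin x hxGA B hB hx
      have hMxL : Mv x ∈ L := (hmemL (Mv x)).mpr ⟨x, hxGA, rfl⟩
      rw [minl, Finset.mem_filter] at hAm
      exact hAm.2 ⟨Mv x, hMxL, hMxB.trans_ssubset hBA⟩
    · have hcard : A.card = 1 := by
        have := Finset.card_pos.mpr hg.1
        omega
      obtain ⟨x, rfl⟩ := Finset.card_eq_one.mp hcard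
      refine ⟨x, rfl, ?_⟩
      rw [← cutEdges_singleton_card G x]
      exact hg.2.2
  have hLk : (minl L).card ≤ Vk.card := by
    have hsub2 : minl L ⊆ Vk.image (fun x => ({x} : Finset V)) := by
      intro A hAm
      obtain ⟨x, rfl, hdx⟩ := hminl A hAm
      exact Finset.mem_image.mpr ⟨x, by simp [hVkdef, hdx], rfl⟩
    calc (minl L).card ≤ (Vk.image (fun x => ({x} : Finset V))).card :=
          Finset.card_le_card hsub2
      _ ≤ Vk.card := Finset.card_image_le
  -- the family is nonempty
  have hLnonempty : L.Nonempty := by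
    have hdr : 0 < G.degree r := lt_of_lt_of_le hk (hdeg r)
    rw [← SimpleGraph.card_neighborFinset_eq_degree] at hdr
    obtain ⟨w, hw⟩ := Finset.card_pos.mp hdr
    rw [SimpleGraph.mem_neighborFinset] at hw
    rcases hedgeGA r w hw with h | h
    · exact absurd h hGAr
    · exact ⟨Mv w, (hmemL (Mv w)).mpr ⟨w, h, rfl⟩⟩
  have hm1 : 1 ≤ (maxl L).card := by
    obtain ⟨A, hA⟩ := hLnonempty
    obtain ⟨B, hB, _⟩ := exists_max_superset L hA
    exact Finset.card_pos.mpr ⟨B, hB⟩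
  -- the bad cuts
  set Sbad : Finset (Finset V) :=
    L.filter (fun A => 2 ≤ (gens A).card ∨ 2 ≤ nchild L A) with hSbaddef
  -- coverage of non-snug vertices
  have hcover : Nf ⊆ Rf ∪ Vk ∪ Sbad.biUnion gens := by
    intro v hv
    rw [hNfdef, Finset.mem_filter] at hv
    have hnsnug : ¬ Snug G k r v := hv.2
    by_cases hGAv : GA v
    swap
    · exact Finset.mem_union_left _ (Finset.mem_union_left _ (by simp [hRfdef, hGAv]))
    by_cases hdk : G.degree v = k
    · exact Finset.mem_union_left _ (Finset.mem_union_right _ (by simp [hVkdef, hdk]))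
    have hdk1 : k + 1 ≤ G.degree v := by
      have := hdeg v
      omega
    have hvr : v ≠ r := fun e => hGAr (e ▸ hGAv)
    have hAL : Mv v ∈ L := (hmemL (Mv v)).mpr ⟨v, hGAv, rfl⟩
    have hAcard : 1 < (Mv v).card := by
      rcases Nat.lt_or_ge 1 (Mv v).card with h | h
      · exact h
      · exfalso
        have hpos := Finset.card_pos.mpr (hMgood v hGAv).1
        have hcard : (Mv v).card = 1 := by omega
        obtain ⟨x, hx⟩ := Finset.card_eq_one.mp hcard
        have hxv : x = v := by
          have := hMmem v hGAv
          rw [hx, Finset.mem_singleton] at this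
          exact this.symm
        have := (hMgood v hGAv).2.2
        rw [hx, hxv, cutEdges_singleton_card] at this
        exact hdk this
    have hvgens : v ∈ gens (Mv v) := (hgensmem (Mv v) v).mpr ⟨hGAv, rfl⟩
    refine Finset.mem_union_right _ (Finset.mem_biUnion.mpr ⟨Mv v, ?_, hvgens⟩)
    rw [hSbaddef, Finset.mem_filter]
    refine ⟨hAL, ?_⟩
    by_contra hnb
    push_neg at hnb
    -- gens (Mv v) = {v}
    have hgv : gens (Mv v) = {v} := by
      refine Finset.eq_singleton_iff_unique_mem.mpr ⟨hvgens, fun u hu => ?_⟩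
      by_contra hne
      have h2 : 2 ≤ (gens (Mv v)).card := by
        have := Finset.one_lt_card.mpr ⟨u, hu, v, hvgens, hne⟩
        omega
      omega
    -- exactly one child
    have hch1 : 1 ≤ nchild L (Mv v) := by
      obtain ⟨B, hB, hBA⟩ := exists_sub_cut hk hG hV hmin (hMgood v hGAv) hAcard
      obtain ⟨x, hx⟩ := hB.1
      have hxGA : GA x := ⟨B, hB, hx⟩
      have hMxL : Mv x ∈ L := (hmemL (Mv x)).mpr ⟨x, hxGA, rfl⟩
      obtain ⟨C, hCL, hcov', _⟩ := exists_child_above L hMxL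
        ((hMmin x hxGA B hB hx).trans_ssubset hBA)
      rw [nchild]
      exact Finset.card_pos.mpr ⟨C, Finset.mem_filter.mpr ⟨hCL, hcov'⟩⟩
    have hcheq : nchild L (Mv v) = 1 := by omega
    rw [nchild] at hcheq
    obtain ⟨C, hC⟩ := Finset.card_eq_one.mp hcheq
    have hCmem : C ∈ L.filter (fun C => Cov L C (Mv v)) := by
      rw [hC]; exact Finset.mem_singleton_self C
    rw [Finset.mem_filter] at hCmem
    obtain ⟨hCL, hcovC⟩ := hCmem
    have hvC : v ∉ C := by
      intro hvC
      have hAC : Mv v ⊆ C := hMmin v hGAv C (hLgood C hCL) hvC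
      exact ssubset_irrefl C (hcovC.1.trans_subset hAC)
    have hCA : C ⊆ Mv v := hcovC.1.subset
    have hAeq : Mv v = insert v C := by
      apply Finset.Subset.antisymm
      · intro x hxA
        have hxGA : GA x := ⟨Mv v, hMgood v hGAv, hxA⟩
        by_cases hMx : Mv x = Mv v
        · have hxg : x ∈ gens (Mv v) := (hgensmem (Mv v) x).mpr ⟨hxGA, hMx⟩
          rw [hgv, Finset.mem_singleton] at hxg
          exact hxg ▸ Finset.mem_insert_self v C
        · have hMxA : Mv x ⊂ Mv v := Finset.ssubset_iff_subset_ne.mpr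
            ⟨hMmin x hxGA (Mv v) (hMgood v hGAv) hxA, hMx⟩
          have hMxL : Mv x ∈ L := (hmemL (Mv x)).mpr ⟨x, hxGA, rfl⟩
          obtain ⟨C', hC'L, hcov', hsub'⟩ := exists_child_above L hMxL hMxA
          have hC'mem : C' ∈ L.filter (fun C => Cov L C (Mv v)) :=
            Finset.mem_filter.mpr ⟨hC'L, hcov'⟩
          rw [hC, Finset.mem_singleton] at hC'mem
          exact Finset.mem_insert_of_mem (hC'mem ▸ hsub' (hMmem x hxGA))
      · rw [Finset.insert_subset_iff]
        exact ⟨hMmem v hGAv, hCA⟩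
    exact hnsnug ⟨hvr, hdk1, C, Mv v,
      (hLgood C hCL).isCut, (hMgood v hGAv).isCut,
      (hLgood C hCL).2.1, (hMgood v hGAv).2.1, hvC, hAeq⟩
  -- final counting
  have hcard1 : Nf.card ≤ Rf.card + Vk.card + ∑ A ∈ Sbad, (gens A).card := by
    calc Nf.card ≤ (Rf ∪ Vk ∪ Sbad.biUnion gens).card := Finset.card_le_card hcover
      _ ≤ (Rf ∪ Vk).card + (Sbad.biUnion gens).card := Finset.card_union_le _ _
      _ ≤ Rf.card + Vk.card + (Sbad.biUnion gens).card :=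
          Nat.add_le_add_right (Finset.card_union_le _ _) _
      _ ≤ Rf.card + Vk.card + ∑ A ∈ Sbad, (gens A).card :=
          Nat.add_le_add_left Finset.card_biUnion_le _
  have hSbadfacts : ∀ A ∈ Sbad, (gens A).card ≤ nchild L A ∧ 2 ≤ nchild L A := by
    intro A hA
    rw [hSbaddef, Finset.mem_filter] at hA
    obtain ⟨hAL, hor⟩ := hA
    have hAcard : 1 < A.card := by
      rcases hor with h | h
      · exact lt_of_lt_of_le (by omega) (Finset.card_le_card (hgensA A))
      · have : 0 < nchild L A := by omega
        rw [nchild] at this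
        obtain ⟨C, hC⟩ := Finset.card_pos.mp this
        rw [Finset.mem_filter] at hC
        have hCne := hLne C hC.1
        have h1 := Finset.card_pos.mpr hCne
        have h2 := Finset.card_lt_card hC.2.1
        omega
    have ha := halpha A hAL hAcard
    refine ⟨ha, ?_⟩
    rcases hor with h | h
    · omega
    · exact h
  have hsum1 : ∑ A ∈ Sbad, (gens A).card ≤
      ∑ A ∈ L.filter (fun A => 2 ≤ nchild L A), nchild L A := by
    calc ∑ A ∈ Sbad, (gens A).card ≤ ∑ A ∈ Sbad, nchild L A :=
          Finset.sum_le_sum (fun A hA => (hSbadfacts A hA).1)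
      _ ≤ ∑ A ∈ L.filter (fun A => 2 ≤ nchild L A), nchild L A := by
          refine Finset.sum_le_sum_of_subset ?_
          intro A hA
          rw [Finset.mem_filter]
          exact ⟨Finset.mem_of_mem_filter A hA, (hSbadfacts A hA).2⟩
  have hlc := laminar_count hlam hLne
  omega
end
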